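/- Let k ≥ 2 and let ℒ be a metric structure on the wedge of k circles. Let 𝒵_k be the set of root-free nontrivial conjugacy classes of F_k, i.e. conjugacy classes of nontrivial elements that are not proper powers. Then the limit h̃_ℒ = lim_{R→∞} (1/R)·log #{w ∈ 𝒵_k : ℓ_ℒ(w) ≤ R} exists and equals the volume entropy h_ℒ of ℒ. -/

import Mathlib

open Filter Topology
open scoped ENNReal

namespace McShane

/-- The ℒ-weighted length of the freely reduced form of `g`: the sum of `L i`
over all occurrences of `aᵢ^{±1}` in the reduced word of `g`. -/
noncomputable def wlen {k : ℕ} (L : Fin k → ℝ) (g : FreeGroup (Fin k)) : ℝ :=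
  ((FreeGroup.toWord g).map fun x => L x.1).sum

/-- The hyperbolic length of a conjugacy class: the infimum of the ℒ-weighted
lengths of its representatives. For positive edge lengths this equals
`∑ mᵢ·L i` where `mᵢ` counts occurrences of `aᵢ^{±1}` in the cyclically reduced form. -/
noncomputable def hlen {k : ℕ} (L : Fin k → ℝ) (c : ConjClasses (FreeGroup (Fin k))) : ℝ :=
  sInf (wlen L '' c.carrier)

/-- The open simplex `Δ_k` of volume-one metric structures on the wedge of `k` circles. -/
def simplex (k : ℕ) : Set (Fin k → ℝ) :=
  {L | (∀ i, 0 < L i) ∧ ∑ i, L i = 1}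

/-- The barycentric point `ℒ* = (1/k, …, 1/k)`. -/
noncomputable def Lstar (k : ℕ) : Fin k → ℝ := fun _ => 1 / k

/-- `g` is primitive iff it belongs to some free basis of the free group,
equivalently it is the image of a basis element under an automorphism. -/
def IsPrimitive {k : ℕ} (g : FreeGroup (Fin k)) : Prop :=
  ∃ (e : FreeGroup (Fin k) ≃* FreeGroup (Fin k)) (i : Fin k), e (FreeGroup.of i) = g

/-- `C_f(ℒ) = ∑_{w ∈ 𝒞_k} f(ℓ_ℒ(w))`, the sum over all nontrivial conjugacy classes. -/
noncomputable def Cf {k : ℕ} (f : ℝ → ℝ) (L : Fin k → ℝ) : ℝ≥0∞ :=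
  ∑' c : {c : ConjClasses (FreeGroup (Fin k)) // c ≠ 1}, ENNReal.ofReal (f (hlen L c.1))

/-- `P_f(ℒ) = ∑_{w ∈ 𝒫_k} f(ℓ_ℒ(w))`, the sum over conjugacy classes of primitive elements. -/
noncomputable def Pf {k : ℕ} (f : ℝ → ℝ) (L : Fin k → ℝ) : ℝ≥0∞ :=
  ∑' c : {c : ConjClasses (FreeGroup (Fin k)) // ∃ g, IsPrimitive g ∧ ConjClasses.mk g = c},
    ENNReal.ofReal (f (hlen L c.1))

/-- A nontrivial element is root-free if it is not a proper power. -/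
def IsRootFree {k : ℕ} (g : FreeGroup (Fin k)) : Prop :=
  g ≠ 1 ∧ ∀ (h : FreeGroup (Fin k)) (n : ℕ), 2 ≤ n → g ≠ h ^ n

open List


variable {k : ℕ}

/-- non-cancelling adjacent pair -/
def NC (a b : Fin k × Bool) : Prop := ¬(a.1 = b.1 ∧ a.2 = !b.2)

/-- reduced word -/
def RW (l : List (Fin k × Bool)) : Prop := List.Chain' NC l

/-- cyclically reduced word -/
def CR (l : List (Fin k × Bool)) : Prop :=
  RW l ∧ ∀ a ∈ l.getLast?, ∀ b ∈ l.head?, NC a b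

lemma NC.symm {a b : Fin k × Bool} (h : NC a b) : NC b a := by
  rintro ⟨h1, h2⟩; exact h ⟨h1.symm, by simp [h2]⟩

lemma nc_self (a : Fin k × Bool) : NC a a := by rintro ⟨_, h⟩; simp at h

lemma reduce_eq_self {l : List (Fin k × Bool)} (h : RW l) : FreeGroup.reduce l = l := by
  induction l with
  | nil => rfl
  | cons x t ih =>
    rw [FreeGroup.reduce.cons, ih h.tail]
    cases t with
    | nil => rfl
    | cons y s =>
      have := (List.isChain_cons_cons.mp h).1
      simp only [NC] at this
      simp [this]

lemma RW_of_no_pattern {l : List (Fin k × Bool)}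
    (h : ∀ (L₂ L₃ : List (Fin k × Bool)) (x : Fin k) (b : Bool),
      l ≠ L₂ ++ (x, b) :: (x, !b) :: L₃) : RW l := by
  induction l with
  | nil => exact List.isChain_nil
  | cons x t ih =>
    have ht : RW t := ih (fun L₂ L₃ y b hy => h (x :: L₂) L₃ y b (by simp [hy]))
    cases t with
    | nil => exact List.isChain_singleton x
    | cons y s =>
      refine List.isChain_cons_cons.mpr ⟨?_, ht⟩
      rintro ⟨h1, h2⟩
      have hy : y = (x.1, !x.2) := by
        obtain ⟨y1, y2⟩ := y
        obtain ⟨x1, x2⟩ := x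
        simp only at h1 h2
        cases y2 <;> simp_all
      exact h [] s x.1 x.2 (by simp [hy])

lemma rw_toWord (g : FreeGroup (Fin k)) : RW g.toWord :=
  RW_of_no_pattern fun L₂ L₃ x b hl =>
    FreeGroup.reduce.not (L₁ := g.toWord) (by rw [FreeGroup.reduce_toWord]; exact hl)

lemma toWord_mk_of_RW {l : List (Fin k × Bool)} (h : RW l) :
    (FreeGroup.mk l).toWord = l := by rw [FreeGroup.toWord_mk, reduce_eq_self h]


variable {k : ℕ}

lemma not_nc_iff {a b : Fin k × Bool} : ¬ NC a b ↔ b = (a.1, !a.2) := by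
  obtain ⟨a1, a2⟩ := a; obtain ⟨b1, b2⟩ := b
  cases a2 <;> cases b2 <;> simp [NC, eq_comm]

lemma invRev_cons (x : Fin k × Bool) (s : List (Fin k × Bool)) :
    FreeGroup.invRev (x :: s) = FreeGroup.invRev s ++ [(x.1, !x.2)] := by
  simp [FreeGroup.invRev]

lemma invRev_nil : FreeGroup.invRev ([] : List (Fin k × Bool)) = [] := rfl

lemma mk_inv_single (x : Fin k × Bool) :
    (FreeGroup.mk [x])⁻¹ = FreeGroup.mk [(x.1, !x.2)] := by
  rw [FreeGroup.inv_mk]; simp [FreeGroup.invRev]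

lemma mk_single_mul_inv (x : Fin k × Bool) :
    FreeGroup.mk [x] * FreeGroup.mk [(x.1, !x.2)] = 1 := by
  rw [← mk_inv_single]; exact mul_inv_cancel _

lemma CR_singleton (a : Fin k × Bool) : CR [a] := by
  refine ⟨List.isChain_singleton a, ?_⟩
  intro x hx y hy
  simp only [List.getLast?_singleton, List.head?_cons, Option.mem_def, Option.some.injEq] at hx hy
  subst hx; subst hy; exact nc_self a

lemma CR_cons_concat {a : Fin k × Bool} {t : List (Fin k × Bool)} (h : CR (a :: t)) :
    CR (t ++ [a]) := by
  cases t with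
  | nil => simpa using h
  | cons y s =>
    obtain ⟨hrw, hj⟩ := h
    have h1 : NC a y := (List.isChain_cons_cons.mp hrw).1
    have h2 : ∀ x ∈ (y :: s).getLast?, NC x a := by
      intro x hx
      exact hj x (by rw [List.getLast?_cons_cons]; exact hx) a (by simp)
    constructor
    · show List.Chain' NC ((y :: s) ++ [a])
      simp only [List.Chain']; rw [List.isChain_append]
      refine ⟨hrw.tail, List.isChain_singleton a, ?_⟩
      intro x hx b hb
      simp only [List.head?_cons, Option.mem_def, Option.some.injEq] at hb
      subst hb
      exact h2 x hx
    · intro p hp q hq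
      rw [show y :: s ++ [a] = (y :: s) ++ [a] from rfl, List.getLast?_concat] at hp
      simp only [Option.mem_def, Option.some.injEq] at hp
      subst hp
      simp only [List.cons_append, List.head?_cons, Option.mem_def, Option.some.injEq] at hq
      subst hq
      exact h1

lemma CR_rotate {l : List (Fin k × Bool)} (h : CR l) (r : ℕ) : CR (l.rotate r) := by
  induction r generalizing l with
  | zero => simpa [List.rotate_zero] using h
  | succ n ih =>
    cases l with
    | nil => simpa using h
    | cons a t =>
      rw [List.rotate_cons_succ]
      exact ih (CR_cons_concat h)


variable {k : ℕ}

lemma nc_iff' {a b : Fin k × Bool} : NC a b ↔ b ≠ (a.1, !a.2) :=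
  ⟨fun h hb => (not_nc_iff.mpr hb) h, fun h => by
    by_contra hn
    exact h (not_nc_iff.mp hn)⟩

lemma mk_cons' (x : Fin k × Bool) (l : List (Fin k × Bool)) :
    FreeGroup.mk [x] * FreeGroup.mk l = FreeGroup.mk (x :: l) := by
  rw [FreeGroup.mul_mk]; rfl

lemma conj_no_cancel_el (x : Fin k × Bool) (w : List (Fin k × Bool)) :
    FreeGroup.mk [x] * FreeGroup.mk w * FreeGroup.mk [(x.1, !x.2)]
      = FreeGroup.mk (x :: w ++ [(x.1, !x.2)]) := by
  rw [FreeGroup.mul_mk, FreeGroup.mul_mk]; rfl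

lemma conj_left_cancel_el (x : Fin k × Bool) (d₂ : List (Fin k × Bool)) :
    FreeGroup.mk [x] * FreeGroup.mk ((x.1, !x.2) :: d₂) * FreeGroup.mk [(x.1, !x.2)]
      = FreeGroup.mk (d₂ ++ [(x.1, !x.2)]) := by
  have h1 : FreeGroup.mk ((x.1, !x.2) :: d₂) = (FreeGroup.mk [x])⁻¹ * FreeGroup.mk d₂ := by
    rw [mk_inv_single, FreeGroup.mul_mk]; rfl
  have h2 : FreeGroup.mk (d₂ ++ [(x.1, !x.2)]) = FreeGroup.mk d₂ * (FreeGroup.mk [x])⁻¹ := by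
    rw [mk_inv_single, FreeGroup.mul_mk]
  rw [h1, h2, ← mk_inv_single]
  group

lemma conj_right_cancel_el (x : Fin k × Bool) (d₃ : List (Fin k × Bool)) :
    FreeGroup.mk [x] * FreeGroup.mk (d₃ ++ [x]) * FreeGroup.mk [(x.1, !x.2)]
      = FreeGroup.mk (x :: d₃) := by
  have h1 : FreeGroup.mk (d₃ ++ [x]) = FreeGroup.mk d₃ * FreeGroup.mk [x] := by
    rw [FreeGroup.mul_mk]
  rw [h1, ← mk_cons' x d₃, ← mk_inv_single]
  group

lemma conj_both_cancel_el (x : Fin k × Bool) (m : List (Fin k × Bool)) :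
    FreeGroup.mk [x] * FreeGroup.mk (((x.1, !x.2) :: m) ++ [x]) * FreeGroup.mk [(x.1, !x.2)]
      = FreeGroup.mk m := by
  have h1 : FreeGroup.mk (((x.1, !x.2) :: m) ++ [x])
      = (FreeGroup.mk [x])⁻¹ * FreeGroup.mk m * FreeGroup.mk [x] := by
    rw [mk_inv_single, FreeGroup.mul_mk, FreeGroup.mul_mk]; rfl
  rw [h1, ← mk_inv_single]
  group

lemma conj_normal_form {c : List (Fin k × Bool)} (hc : CR c) (l : List (Fin k × Bool)) :
    ∃ s r, (FreeGroup.mk l * FreeGroup.mk c * (FreeGroup.mk l)⁻¹).toWord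
      = s ++ c.rotate r ++ FreeGroup.invRev s := by
  induction l with
  | nil =>
    refine ⟨[], 0, ?_⟩
    simp only [List.rotate_zero, invRev_nil, List.append_nil, List.nil_append]
    rw [← FreeGroup.one_eq_mk]
    simpa using toWord_mk_of_RW hc.1
  | cons x t ih =>
    obtain ⟨s, r, hw⟩ := ih
    have hcrd : CR (c.rotate r) := CR_rotate hc r
    have hgw : FreeGroup.mk t * FreeGroup.mk c * (FreeGroup.mk t)⁻¹
        = FreeGroup.mk (s ++ c.rotate r ++ FreeGroup.invRev s) := by
      rw [← hw, FreeGroup.mk_toWord]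
    have hT : FreeGroup.mk (x :: t) * FreeGroup.mk c * (FreeGroup.mk (x :: t))⁻¹
        = FreeGroup.mk [x] * (FreeGroup.mk t * FreeGroup.mk c * (FreeGroup.mk t)⁻¹)
          * FreeGroup.mk [(x.1, !x.2)] := by
      rw [← mk_cons' x t, ← mk_inv_single]; group
    rw [hT, hgw]
    cases s with
    | cons x' s₂ =>
      by_cases hx' : x' = (x.1, !x.2)
      · subst hx'
        refine ⟨s₂, r, ?_⟩
        have hlist : ((x.1, !x.2) :: s₂) ++ c.rotate r ++ FreeGroup.invRev ((x.1, !x.2) :: s₂)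
            = ((x.1, !x.2) :: (s₂ ++ c.rotate r ++ FreeGroup.invRev s₂)) ++ [x] := by
          rw [invRev_cons]
          simp only [Bool.not_not, Prod.mk.eta, List.cons_append, List.append_assoc]
        have hrww : RW (s₂ ++ c.rotate r ++ FreeGroup.invRev s₂) := by
          have h0 : RW (((x.1, !x.2) :: s₂) ++ c.rotate r
              ++ FreeGroup.invRev ((x.1, !x.2) :: s₂)) := by
            rw [← hw]; exact rw_toWord _
          rw [hlist] at h0
          exact h0.infix ⟨[(x.1, !x.2)], [x], by simp⟩
        have hel := conj_both_cancel_el x (s₂ ++ c.rotate r ++ FreeGroup.invRev s₂)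
        rw [show ((x.1, !x.2) :: (s₂ ++ c.rotate r ++ FreeGroup.invRev s₂)) ++ [x]
            = (((x.1, !x.2) :: (s₂ ++ c.rotate r ++ FreeGroup.invRev s₂))) ++ [x] from rfl] at hlist
        rw [hlist, hel, toWord_mk_of_RW hrww]
      · refine ⟨x :: x' :: s₂, r, ?_⟩
        have hNC : NC x x' := by
          by_contra hcon
          exact hx' (not_nc_iff.mp hcon)
        have hNC2 : NC (x'.1, !x'.2) (x.1, !x.2) := by
          rw [nc_iff']
          intro hh
          rw [Prod.ext_iff] at hh
          simp only [Bool.not_not] at hh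
          exact hx' (Prod.ext hh.1.symm hh.2.symm)
        have hrw' : RW (x :: ((x' :: s₂) ++ c.rotate r ++ FreeGroup.invRev (x' :: s₂))
            ++ [(x.1, !x.2)]) := by
          show List.Chain' NC ((x :: ((x' :: s₂) ++ c.rotate r ++ FreeGroup.invRev (x' :: s₂)))
            ++ [(x.1, !x.2)])
          simp only [List.Chain']; rw [List.isChain_append]
          refine ⟨?_, List.isChain_singleton _, ?_⟩
          · refine List.isChain_cons.mpr ⟨?_, by rw [← hw]; exact rw_toWord _⟩
            intro y hy
            simp only [List.cons_append, List.head?_cons, Option.mem_def, Option.some.injEq] at hy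
            subst hy; exact hNC
          · intro p hp q hq
            simp only [List.head?_cons, Option.mem_def, Option.some.injEq] at hq
            subst hq
            have hpz : (x'.1, !x'.2) = p := by
              rw [show (x :: ((x' :: s₂) ++ c.rotate r ++ FreeGroup.invRev (x' :: s₂)))
                  = (x :: (((x' :: s₂) ++ c.rotate r) ++ FreeGroup.invRev s₂)) ++ [(x'.1, !x'.2)] by
                    rw [invRev_cons]; simp, List.getLast?_concat] at hp
              simpa using hp
            rw [← hpz]; exact hNC2
        rw [conj_no_cancel_el x ((x' :: s₂) ++ c.rotate r ++ FreeGroup.invRev (x' :: s₂)),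
          toWord_mk_of_RW hrw']
        rw [invRev_cons (x := x)]
        simp
    | nil =>
      simp only [List.nil_append, invRev_nil, List.append_nil] at hw hgw ⊢
      cases hdc : c.rotate r with
      | nil =>
        have hcnil : c = [] := by
          have := congrArg List.length hdc
          rw [List.length_rotate] at this
          exact List.eq_nil_of_length_eq_zero this
        refine ⟨[], r, ?_⟩
        rw [← FreeGroup.one_eq_mk, mul_one, mk_single_mul_inv]
        simp [hcnil, FreeGroup.toWord_one]
      | cons y d₂ =>
        by_cases hy : y = (x.1, !x.2)
        · refine ⟨[], r + 1, ?_⟩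
          have hrot : c.rotate (r + 1) = d₂ ++ [y] := by
            rw [← List.rotate_rotate, hdc, List.rotate_cons_succ, List.rotate_zero]
          have hrw' : RW (d₂ ++ [y]) := by
            rw [← hrot]; exact (CR_rotate hc (r + 1)).1
          subst hy
          rw [conj_left_cancel_el x d₂, toWord_mk_of_RW hrw', hrot]
          simp
        · obtain ⟨z, d₃, hd3⟩ : ∃ z d₃, y :: d₂ = d₃ ++ [z] :=
            ⟨(y :: d₂).getLast (by simp), (y :: d₂).dropLast, (List.dropLast_append_getLast _).symm⟩
          by_cases hz : z = x
          · refine ⟨[], r + d₃.length, ?_⟩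
            have hlen : d₃.length ≤ (d₃ ++ [z]).length := by
              rw [List.length_append]; exact Nat.le_add_right _ _
            have hrot : c.rotate (r + d₃.length) = z :: d₃ := by
              rw [← List.rotate_rotate, hdc, hd3, List.rotate_eq_drop_append_take hlen,
                List.drop_left' rfl, List.take_left' rfl]
              rfl
            have hrw' : RW (z :: d₃) := by
              rw [← hrot]; exact (CR_rotate hc _).1
            rw [hd3, hz, conj_right_cancel_el x d₃, ← hz, toWord_mk_of_RW hrw', hrot]
            simp
          · refine ⟨[x], r, ?_⟩
            have hNCxy : NC x y := by
              by_contra hcon; exact hy (not_nc_iff.mp hcon)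
            have hNCz : NC z (x.1, !x.2) := by
              rw [nc_iff']
              intro hh
              rw [Prod.ext_iff] at hh
              simp only at hh
              exact hz (Prod.ext hh.1.symm (Bool.not_inj hh.2).symm)
            have hrw' : RW ((x :: (y :: d₂)) ++ [(x.1, !x.2)]) := by
              show List.Chain' NC _
              simp only [List.Chain']; rw [List.isChain_append]
              refine ⟨?_, List.isChain_singleton _, ?_⟩
              · refine List.isChain_cons.mpr ⟨?_, by rw [← hdc]; exact hcrd.1⟩
                intro p hp
                simp only [List.head?_cons, Option.mem_def, Option.some.injEq] at hp
                subst hp; exact hNCxy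
              · intro p hp q hq
                simp only [List.head?_cons, Option.mem_def, Option.some.injEq] at hq
                subst hq
                have hpz : z = p := by
                  rw [show x :: (y :: d₂) = (x :: d₃) ++ [z] by rw [hd3]; rfl,
                    List.getLast?_concat] at hp
                  simpa using hp
                rw [← hpz]; exact hNCz
            rw [conj_no_cancel_el x (y :: d₂), toWord_mk_of_RW (by
              show RW (x :: (y :: d₂) ++ [(x.1, !x.2)])
              exact hrw')]
            rw [← hdc]
            simp [invRev_cons, invRev_nil]


variable {k : ℕ}

lemma CR_nil : CR ([] : List (Fin k × Bool)) := by
  refine ⟨List.isChain_nil, ?_⟩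
  intro a ha; simp at ha

lemma eq_rotate_of_isConj {l₁ l₂ : List (Fin k × Bool)} (h₁ : CR l₁) (h₂ : CR l₂)
    (h : IsConj (FreeGroup.mk l₁) (FreeGroup.mk l₂)) : ∃ r, l₂ = l₁.rotate r := by
  obtain ⟨u, hu⟩ := isConj_iff.mp h
  obtain ⟨s, r, hw⟩ := conj_normal_form h₁ u.toWord
  rw [FreeGroup.mk_toWord, hu, toWord_mk_of_RW h₂.1] at hw
  cases s with
  | nil => exact ⟨r, by simpa using hw⟩
  | cons a s' =>
    exfalso
    by_cases hl1 : l₁ = []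
    · subst hl1
      have h1 : FreeGroup.mk l₂ = 1 := by
        rw [← hu, ← FreeGroup.one_eq_mk]; group
      have h2 : l₂ = [] := by
        rw [← toWord_mk_of_RW h₂.1, h1, FreeGroup.toWord_one]
      rw [h2] at hw
      simp at hw
    · have hshape : l₂ = (a :: (s' ++ l₁.rotate r ++ FreeGroup.invRev s')) ++ [(a.1, !a.2)] := by
        rw [hw, invRev_cons]; simp
      have hlast : l₂.getLast? = some (a.1, !a.2) := by rw [hshape, List.getLast?_concat]
      have hhead : l₂.head? = some a := by rw [hshape]; rfl
      have := h₂.2 (a.1, !a.2) (by rw [hlast]; rfl) a (by rw [hhead]; rfl)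
      exact this ⟨rfl, by simp⟩

lemma exists_cyclic_reduction (g : FreeGroup (Fin k)) :
    ∃ (u : FreeGroup (Fin k)) (c : List (Fin k × Bool)),
      CR c ∧ g = u * FreeGroup.mk c * u⁻¹ := by
  suffices H : ∀ (n : ℕ) (g : FreeGroup (Fin k)), g.toWord.length ≤ n →
      ∃ u c, CR c ∧ g = u * FreeGroup.mk c * u⁻¹ from H _ g le_rfl
  intro n
  induction n with
  | zero =>
    intro g hg
    refine ⟨1, [], CR_nil, ?_⟩
    have : g.toWord = [] := List.eq_nil_of_length_eq_zero (Nat.le_zero.mp hg)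
    have hg1 : g = 1 := FreeGroup.toWord_eq_nil_iff.mp this
    rw [hg1, ← FreeGroup.one_eq_mk]; group
  | succ n ih =>
    intro g hg
    by_cases hcr : CR g.toWord
    · exact ⟨1, g.toWord, hcr, by rw [FreeGroup.mk_toWord]; group⟩
    · have hrw := rw_toWord g
      have hex : ∃ p ∈ g.toWord.getLast?, ∃ q ∈ g.toWord.head?, ¬ NC p q := by
        by_contra hcon
        push_neg at hcon
        exact hcr ⟨hrw, fun a ha b hb => hcon a ha b hb⟩
      obtain ⟨p, hp, q, hq, hnc⟩ := hex
      have hqp : q = (p.1, !p.2) := not_nc_iff.mp hnc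
      cases htw : g.toWord with
      | nil => rw [htw] at hq; simp at hq
      | cons q' tl =>
        have hq' : q' = q := by
          rw [htw] at hq; simpa using hq
        cases tl with
        | nil =>
          rw [htw] at hp
          have hpq : q' = p := by simpa using hp
          rw [hq', hqp] at hpq
          exact absurd (congrArg Prod.snd hpq) (by simp)
        | cons b tl' =>
          obtain ⟨z, d₃, hd3⟩ : ∃ z d₃, b :: tl' = d₃ ++ [z] :=
            ⟨(b :: tl').getLast (by simp), (b :: tl').dropLast,
              (List.dropLast_append_getLast _).symm⟩
          have hpz : z = p := by
            rw [htw, List.getLast?_cons_cons, hd3, List.getLast?_concat] at hp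
            simpa using hp
          have hdecomp : g.toWord = q :: d₃ ++ [z] := by
            rw [htw, hq', hd3]; rfl
          have hrwd : RW d₃ := by
            have : RW (q :: d₃ ++ [z]) := by rw [← hdecomp]; exact hrw
            exact (this : List.Chain' NC ((q :: d₃) ++ [z])).infix ⟨[q], [z], by simp⟩
          have hzq : z = (q.1, !q.2) := by
            rw [hqp, hpz]
            obtain ⟨p1, p2⟩ := p
            cases p2 <;> simp
          have hmk : g = FreeGroup.mk [q] * FreeGroup.mk d₃ * (FreeGroup.mk [q])⁻¹ := by
            rw [mk_inv_single, ← hzq, FreeGroup.mul_mk, FreeGroup.mul_mk, ← FreeGroup.mk_toWord (x := g), hdecomp]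
            rfl
          have hlen : (FreeGroup.mk d₃).toWord.length ≤ n := by
            rw [toWord_mk_of_RW hrwd]
            have := congrArg List.length hdecomp
            simp only [List.length_cons, List.length_append, List.length_singleton] at this
            omega
          obtain ⟨u, c, hc, hrec⟩ := ih (FreeGroup.mk d₃) hlen
          refine ⟨FreeGroup.mk [q] * u, c, hc, ?_⟩
          rw [hmk, hrec]
          group

lemma CR_flatten {l : List (Fin k × Bool)} (hl : CR l) (n : ℕ) :
    CR ((List.replicate n l).flatten) ∧
      ((List.replicate n l).flatten = [] ∨
        (((List.replicate n l).flatten).head? = l.head? ∧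
         ((List.replicate n l).flatten).getLast? = l.getLast?)) := by
  induction n with
  | zero => exact ⟨CR_nil, Or.inl rfl⟩
  | succ n ih =>
    by_cases hl0 : l = []
    · subst hl0
      have hfl : (List.replicate (n + 1) ([] : List (Fin k × Bool))).flatten = [] := by
        simp
      rw [hfl]
      exact ⟨CR_nil, Or.inl rfl⟩
    · rw [List.replicate_succ, List.flatten_cons]
      rcases ih.2 with hnil | ⟨hh, hg⟩
      · rw [hnil, List.append_nil]
        exact ⟨hl, Or.inr ⟨rfl, rfl⟩⟩
      · have hJne : (List.replicate n l).flatten ≠ [] := by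
          intro hc
          rw [hc] at hh
          exact hl0 (List.head?_eq_none_iff.mp hh.symm)
        constructor
        · constructor
          · show List.Chain' NC (l ++ (List.replicate n l).flatten)
            simp only [List.Chain']; rw [List.isChain_append]
            refine ⟨hl.1, (ih.1).1, ?_⟩
            intro x hx y hy
            rw [hh] at hy
            exact hl.2 x hx y hy
          · intro x hx y hy
            rw [List.getLast?_append_of_ne_nil _ hJne, hg] at hx
            rw [List.head?_append_of_ne_nil _ hl0] at hy
            exact hl.2 x hx y hy
        · right
          constructor
          · rw [List.head?_append_of_ne_nil _ hl0]
          · rw [List.getLast?_append_of_ne_nil _ hJne, hg]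

lemma toWord_pow {l : List (Fin k × Bool)} (hl : CR l) (n : ℕ) :
    (FreeGroup.mk l ^ n).toWord = (List.replicate n l).flatten := by
  rw [FreeGroup.pow_mk, toWord_mk_of_RW (CR_flatten hl n).1.1]


variable {k : ℕ} {L : Fin k → ℝ}

noncomputable def wl (L : Fin k → ℝ) (l : List (Fin k × Bool)) : ℝ :=
  (l.map fun x => L x.1).sum

lemma wlen_def (g : FreeGroup (Fin k)) : wlen L g = wl L g.toWord := rfl

lemma wl_append (l₁ l₂ : List (Fin k × Bool)) : wl L (l₁ ++ l₂) = wl L l₁ + wl L l₂ := by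
  simp [wl]

lemma wl_nonneg (hL : ∀ i, 0 < L i) (l : List (Fin k × Bool)) : 0 ≤ wl L l := by
  apply List.sum_nonneg
  intro x hx
  obtain ⟨y, _, rfl⟩ := List.mem_map.mp hx
  exact (hL y.1).le

lemma wlen_nonneg (hL : ∀ i, 0 < L i) (g : FreeGroup (Fin k)) : 0 ≤ wlen L g :=
  wl_nonneg hL _

lemma wl_invRev (l : List (Fin k × Bool)) : wl L (FreeGroup.invRev l) = wl L l := by
  simp [wl, FreeGroup.invRev, List.map_reverse, List.sum_reverse, Function.comp_def]

lemma wl_rotate (l : List (Fin k × Bool)) (r : ℕ) : wl L (l.rotate r) = wl L l := by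
  simpa [wl] using (((l.rotate_perm r).map fun x => L x.1)).sum_eq

lemma wl_flatten_replicate (l : List (Fin k × Bool)) (n : ℕ) :
    wl L ((List.replicate n l).flatten) = n * wl L l := by
  induction n with
  | zero => simp [wl]
  | succ n ih =>
    rw [List.replicate_succ, List.flatten_cons, wl_append, ih]
    push_cast
    ring

lemma wl_ge_length {m : ℝ} (hml : ∀ i, m ≤ L i) (l : List (Fin k × Bool)) :
    m * l.length ≤ wl L l := by
  have := List.card_nsmul_le_sum (l := l.map fun x => L x.1) (n := m) ?_
  · simpa [wl, nsmul_eq_mul, mul_comm] using this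
  · intro x hx
    obtain ⟨y, _, rfl⟩ := List.mem_map.mp hx
    exact hml y.1

lemma wl_singleton_ge {m : ℝ} (hm : 0 < m) (hml : ∀ i, m ≤ L i)
    {l : List (Fin k × Bool)} (hl : l ≠ []) : m ≤ wl L l := by
  have h1 : (1 : ℝ) ≤ l.length := by
    have : 1 ≤ l.length := List.length_pos_iff.mpr hl
    exact_mod_cast this
  have h2 := wl_ge_length hml l
  nlinarith

lemma mem_carrier_self (g : FreeGroup (Fin k)) : g ∈ (ConjClasses.mk g).carrier :=
  ConjClasses.mem_carrier_iff_mk_eq.mpr rfl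

lemma hlen_le_wlen (hL : ∀ i, 0 < L i) {g : FreeGroup (Fin k)} {c : ConjClasses (FreeGroup (Fin k))}
    (hg : g ∈ c.carrier) : hlen L c ≤ wlen L g :=
  csInf_le ⟨0, fun y ⟨v, _, hv⟩ => hv ▸ wlen_nonneg hL v⟩ (Set.mem_image_of_mem _ hg)

lemma hlen_class_CR (hL : ∀ i, 0 < L i) {l : List (Fin k × Bool)} (hl : CR l) :
    hlen L (ConjClasses.mk (FreeGroup.mk l)) = wl L l := by
  apply _root_.le_antisymm
  · have := hlen_le_wlen hL (mem_carrier_self (FreeGroup.mk l))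
    rwa [wlen_def, toWord_mk_of_RW hl.1] at this
  · apply le_csInf ⟨wlen L (FreeGroup.mk l), Set.mem_image_of_mem _ (mem_carrier_self _)⟩
    rintro y ⟨v, hv, rfl⟩
    rw [ConjClasses.mem_carrier_iff_mk_eq] at hv
    have hconj : IsConj (FreeGroup.mk l) v := ConjClasses.mk_eq_mk_iff_isConj.mp hv.symm
    obtain ⟨u, hu⟩ := isConj_iff.mp hconj
    obtain ⟨s, r, hw⟩ := conj_normal_form hl u.toWord
    rw [FreeGroup.mk_toWord, hu] at hw
    rw [wlen_def, hw, wl_append, wl_append, wl_invRev, wl_rotate]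
    nlinarith [wl_nonneg hL s, wl_nonneg hL l]

lemma ball_finite {m : ℝ} (hm : 0 < m) (hml : ∀ i, m ≤ L i) (R : ℝ) :
    {g : FreeGroup (Fin k) | wlen L g ≤ R}.Finite := by
  have hL : ∀ i, 0 < L i := fun i => lt_of_lt_of_le hm (hml i)
  by_cases hR : 0 ≤ R
  · apply Set.Finite.subset ((List.finite_length_le (Fin k × Bool) ⌊R / m⌋₊).image FreeGroup.mk)
    intro g hg
    refine ⟨g.toWord, ?_, FreeGroup.mk_toWord⟩
    simp only [Set.mem_setOf_eq]
    rw [Nat.le_floor_iff (div_nonneg hR hm.le), le_div_iff₀ hm]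
    have h1 := wl_ge_length hml g.toWord
    have hgg : wl L g.toWord ≤ R := hg
    linarith
  · apply Set.Finite.subset (Set.finite_empty)
    intro g hg
    exact absurd (le_trans (wlen_nonneg hL g) hg) hR

lemma exists_min_rep {m : ℝ} (hm : 0 < m) (hml : ∀ i, m ≤ L i) (hL : ∀ i, 0 < L i)
    {c : ConjClasses (FreeGroup (Fin k))} {R : ℝ} (hR : hlen L c ≤ R) :
    ∃ g, ConjClasses.mk g = c ∧ wlen L g = hlen L c ∧ wlen L g ≤ R := by
  set S := wlen L '' c.carrier with hS
  have hbdd : BddBelow S := ⟨0, fun y ⟨v, _, hv⟩ => hv ▸ wlen_nonneg hL v⟩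
  obtain ⟨g₀, hg₀⟩ := ConjClasses.exists_rep c
  have hSne : S.Nonempty := ⟨wlen L g₀, Set.mem_image_of_mem _ (hg₀ ▸ mem_carrier_self g₀)⟩
  set S' := S ∩ Set.Iic (R + 1) with hS'
  have hS'fin : S'.Finite := by
    apply Set.Finite.subset ((ball_finite hm hml (R + 1)).image (wlen L))
    rintro y ⟨⟨v, hv, rfl⟩, hy2⟩
    exact ⟨v, hy2, rfl⟩
  have hS'ne : S'.Nonempty := by
    by_contra hcon
    rw [Set.not_nonempty_iff_eq_empty] at hcon
    have : R + 1 ≤ sInf S := by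
      apply le_csInf hSne
      intro y hy
      by_contra hlt
      push_neg at hlt
      have hyS' : y ∈ S' := ⟨hy, hlt.le⟩
      rw [hcon] at hyS'
      simpa using hyS'
    have h3 : sInf S ≤ R := hR
    linarith
  have hmem : sInf S' ∈ S' := Set.Nonempty.csInf_mem hS'ne hS'fin
  have hlb : ∀ y ∈ S, sInf S' ≤ y := by
    intro y hy
    by_cases hyR : y ≤ R + 1
    · exact csInf_le hS'fin.bddBelow ⟨hy, hyR⟩
    · exact le_trans hmem.2 (le_of_not_ge hyR)
  have heq : sInf S = sInf S' :=
    le_antisymm (csInf_le hbdd hmem.1) (le_csInf hSne hlb)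
  obtain ⟨g, hgc, hgw⟩ := hmem.1
  refine ⟨g, ConjClasses.mem_carrier_iff_mk_eq.mp hgc, ?_, ?_⟩
  · rw [hgw]; exact heq.symm
  · rw [hgw, ← heq]; exact hR


variable {k : ℕ} {L : Fin k → ℝ}

lemma not_nc_iff' {a b : Fin k × Bool} : ¬ NC a b ↔ a = (b.1, !b.2) := by
  rw [not_nc_iff]
  constructor
  · rintro rfl
    simp only [Bool.not_not, Prod.mk.eta]
  · rintro rfl
    simp only [Bool.not_not, Prod.mk.eta]

lemma exists_CR_rep (c : ConjClasses (FreeGroup (Fin k))) :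
    ∃ l, CR l ∧ ConjClasses.mk (FreeGroup.mk l) = c := by
  obtain ⟨g, hg⟩ := ConjClasses.exists_rep c
  obtain ⟨u, l, hl, hgu⟩ := exists_cyclic_reduction g
  refine ⟨l, hl, ?_⟩
  rw [← hg, hgu]
  exact ConjClasses.mk_eq_mk_iff_isConj.mpr (isConj_iff.mpr ⟨u, rfl⟩)

lemma ballT_finite {m : ℝ} (hm : 0 < m) (hml : ∀ i, m ≤ L i) (R : ℝ) :
    Finite {g : FreeGroup (Fin k) // wlen L g ≤ R} :=
  (ball_finite hm hml R).to_subtype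

lemma T_finite {m : ℝ} (hm : 0 < m) (hml : ∀ i, m ≤ L i) (R : ℝ) :
    Finite {c : ConjClasses (FreeGroup (Fin k)) // hlen L c ≤ R} := by
  have hL : ∀ i, 0 < L i := fun i => lt_of_lt_of_le hm (hml i)
  have := ballT_finite hm hml R
  apply Finite.of_injective (β := {g : FreeGroup (Fin k) // wlen L g ≤ R})
    (fun c => ⟨Classical.choose (exists_min_rep hm hml hL c.2),
      (Classical.choose_spec (exists_min_rep hm hml hL c.2)).2.2⟩)
  intro c₁ c₂ heq
  rw [Subtype.mk.injEq] at heq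
  have h1 := (Classical.choose_spec (exists_min_rep hm hml hL c₁.2)).1
  have h2 := (Classical.choose_spec (exists_min_rep hm hml hL c₂.2)).1
  apply Subtype.ext
  rw [← h1, ← h2, heq]

lemma card_T_le_ball {m : ℝ} (hm : 0 < m) (hml : ∀ i, m ≤ L i) (R : ℝ) :
    Nat.card {c : ConjClasses (FreeGroup (Fin k)) // hlen L c ≤ R}
      ≤ Nat.card {g : FreeGroup (Fin k) // wlen L g ≤ R} := by
  have hL : ∀ i, 0 < L i := fun i => lt_of_lt_of_le hm (hml i)
  have := ballT_finite hm hml R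
  apply Nat.card_le_card_of_injective
    (fun c : {c : ConjClasses (FreeGroup (Fin k)) // hlen L c ≤ R} =>
      (⟨Classical.choose (exists_min_rep hm hml hL c.2),
        (Classical.choose_spec (exists_min_rep hm hml hL c.2)).2.2⟩ :
          {g : FreeGroup (Fin k) // wlen L g ≤ R}))
  intro c₁ c₂ heq
  rw [Subtype.mk.injEq] at heq
  have h1 := (Classical.choose_spec (exists_min_rep hm hml hL c₁.2)).1
  have h2 := (Classical.choose_spec (exists_min_rep hm hml hL c₂.2)).1
  apply Subtype.ext
  rw [← h1, ← h2, heq]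

lemma crw_finite {m : ℝ} (hm : 0 < m) (hml : ∀ i, m ≤ L i) (R : ℝ) :
    Finite {l : List (Fin k × Bool) // CR l ∧ wl L l ≤ R} := by
  have hfin : Finite {l : List (Fin k × Bool) // l.length ≤ ⌊R / m⌋₊} := by
    have := (List.finite_length_le (Fin k × Bool) ⌊R / m⌋₊).to_subtype
    exact this
  have hlen : ∀ l : {l : List (Fin k × Bool) // CR l ∧ wl L l ≤ R},
      l.1.length ≤ ⌊R / m⌋₊ := by
    intro l
    by_cases hR : 0 ≤ R
    · rw [Nat.le_floor_iff (div_nonneg hR hm.le), le_div_iff₀ hm]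
      have := wl_ge_length hml l.1
      have h2 := l.2.2
      linarith
    · exfalso
      have hL : ∀ i, 0 < L i := fun i => lt_of_lt_of_le hm (hml i)
      exact hR (le_trans (wl_nonneg hL l.1) l.2.2)
  apply Finite.of_injective (β := {l : List (Fin k × Bool) // l.length ≤ ⌊R / m⌋₊})
    (fun l => ⟨l.1, hlen l⟩)
  intro l₁ l₂ heq
  rw [Subtype.mk.injEq] at heq
  exact Subtype.ext heq

lemma card_ball_le_crw {m Mx : ℝ} (hk : 2 ≤ k) (hm : 0 < m) (hml : ∀ i, m ≤ L i)
    (hMx : L ⟨0, by omega⟩ ≤ Mx ∧ L ⟨1, by omega⟩ ≤ Mx) (R : ℝ) :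
    Nat.card {g : FreeGroup (Fin k) // wlen L g ≤ R - Mx}
      ≤ Nat.card {l : List (Fin k × Bool) // CR l ∧ wl L l ≤ R} := by
  have := crw_finite hm hml (L := L) R
  have hcand : ∀ g : FreeGroup (Fin k), ∃ y : Fin k × Bool,
      (y.1 = ⟨0, by omega⟩ ∨ y.1 = ⟨1, by omega⟩) ∧ CR (g.toWord ++ [y]) := by
    intro g
    suffices hy : ∃ y : Fin k × Bool, (y.1 = ⟨0, by omega⟩ ∨ y.1 = ⟨1, by omega⟩) ∧
        (∀ a ∈ g.toWord.getLast?, NC a y) ∧ (∀ b ∈ g.toWord.head?, NC y b) by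
      obtain ⟨y, hy1, hy2, hy3⟩ := hy
      refine ⟨y, hy1, ?_, ?_⟩
      · show List.Chain' NC (g.toWord ++ [y])
        simp only [List.Chain']; rw [List.isChain_append]
        refine ⟨rw_toWord g, List.isChain_singleton _, ?_⟩
        intro a ha b hb
        simp only [List.head?_cons, Option.mem_def, Option.some.injEq] at hb
        subst hb
        exact hy2 a ha
      · intro a ha b hb
        rw [List.getLast?_concat] at ha
        simp only [Option.mem_def, Option.some.injEq] at ha
        subst ha
        cases htw : g.toWord with
        | nil =>
          rw [htw] at hb
          simp only [List.nil_append, List.head?_cons, Option.mem_def, Option.some.injEq] at hb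
          subst hb
          exact nc_self y
        | cons q t =>
          rw [htw] at hb
          simp only [List.cons_append, List.head?_cons, Option.mem_def, Option.some.injEq] at hb
          subst hb
          apply hy3
          rw [htw]
          rfl
    -- find a good candidate among three
    set i0 : Fin k := ⟨0, by omega⟩
    set i1 : Fin k := ⟨1, by omega⟩
    have hi01 : i0 ≠ i1 := by
      intro hcon
      have := congrArg Fin.val hcon
      simp [i0, i1] at this
    by_cases h1 : (∀ a ∈ g.toWord.getLast?, NC a (i0, true)) ∧
        (∀ b ∈ g.toWord.head?, NC (i0, true) b)
    · exact ⟨(i0, true), Or.inl rfl, h1.1, h1.2⟩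
    by_cases h2 : (∀ a ∈ g.toWord.getLast?, NC a (i0, false)) ∧
        (∀ b ∈ g.toWord.head?, NC (i0, false) b)
    · exact ⟨(i0, false), Or.inl rfl, h2.1, h2.2⟩
    by_cases h3 : (∀ a ∈ g.toWord.getLast?, NC a (i1, true)) ∧
        (∀ b ∈ g.toWord.head?, NC (i1, true) b)
    · exact ⟨(i1, true), Or.inr rfl, h3.1, h3.2⟩
    exfalso
    -- each failure pins the candidate to one of at most two values
    have hbad : ∀ y : Fin k × Bool,
        ¬((∀ a ∈ g.toWord.getLast?, NC a y) ∧ (∀ b ∈ g.toWord.head?, NC y b)) →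
        (∃ a ∈ g.toWord.getLast?, y = (a.1, !a.2)) ∨ (∃ b ∈ g.toWord.head?, y = (b.1, !b.2)) := by
      intro y hy
      rw [not_and_or] at hy
      rcases hy with hy | hy
      · left
        push_neg at hy
        obtain ⟨a, ha, hnc⟩ := hy
        exact ⟨a, ha, not_nc_iff.mp hnc⟩
      · right
        push_neg at hy
        obtain ⟨b, hb, hnc⟩ := hy
        exact ⟨b, hb, not_nc_iff'.mp hnc⟩
    -- getLast? and head? have at most one value each
    obtain ⟨va, hva⟩ : ∃ va, ∀ a ∈ g.toWord.getLast?, (a.1, !a.2) = va := by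
      cases hgl : g.toWord.getLast? with
      | none => exact ⟨(i0, true), fun a ha => by simp at ha⟩
      | some a => exact ⟨(a.1, !a.2), fun b hb => by
          simp only [Option.mem_def, Option.some.injEq] at hb; rw [hb]⟩
    obtain ⟨vb, hvb⟩ : ∃ vb, ∀ b ∈ g.toWord.head?, (b.1, !b.2) = vb := by
      cases hgl : g.toWord.head? with
      | none => exact ⟨(i0, true), fun a ha => by simp at ha⟩
      | some a => exact ⟨(a.1, !a.2), fun b hb => by
          simp only [Option.mem_def, Option.some.injEq] at hb; rw [hb]⟩
    have hpin : ∀ y : Fin k × Bool,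
        ¬((∀ a ∈ g.toWord.getLast?, NC a y) ∧ (∀ b ∈ g.toWord.head?, NC y b)) →
        y = va ∨ y = vb := by
      intro y hy
      rcases hbad y hy with ⟨a, ha, hay⟩ | ⟨b, hb, hby⟩
      · exact Or.inl (by rw [hay, hva a ha])
      · exact Or.inr (by rw [hby, hvb b hb])
    have hval : ((i0 : Fin k), true) ≠ (i0, false) := fun hcc => by
      simpa using congrArg Prod.snd hcc
    have hval2 : ((i0 : Fin k), true) ≠ (i1, true) := fun hcc => hi01 (congrArg Prod.fst hcc)
    have hval3 : ((i0 : Fin k), false) ≠ (i1, true) := fun hcc => hi01 (congrArg Prod.fst hcc)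
    rcases hpin _ h1 with e1 | e1 <;> rcases hpin _ h2 with e2 | e2 <;>
      rcases hpin _ h3 with e3 | e3
    · exact hval (e1.trans e2.symm)
    · exact hval (e1.trans e2.symm)
    · exact hval2 (e1.trans e3.symm)
    · exact hval3 (e2.trans e3.symm)
    · exact hval3 (e2.trans e3.symm)
    · exact hval2 (e1.trans e3.symm)
    · exact hval (e1.trans e2.symm)
    · exact hval (e1.trans e2.symm)
  apply Nat.card_le_card_of_injective
    (fun g : {g : FreeGroup (Fin k) // wlen L g ≤ R - Mx} =>
      (⟨g.1.toWord ++ [Classical.choose (hcand g.1)], (Classical.choose_spec (hcand g.1)).2, by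
        have hspec := Classical.choose_spec (hcand g.1)
        rw [wl_append]
        have hy : L (Classical.choose (hcand g.1)).1 ≤ Mx := by
          rcases hspec.1 with h | h <;> rw [h]
          · exact hMx.1
          · exact hMx.2
        have hg := g.2
        rw [wlen_def] at hg
        have : wl L [Classical.choose (hcand g.1)] = L (Classical.choose (hcand g.1)).1 := by
          simp [wl]
        rw [this]
        linarith⟩ : {l : List (Fin k × Bool) // CR l ∧ wl L l ≤ R}))
  intro g₁ g₂ heq
  rw [Subtype.mk.injEq] at heq
  have := congrArg List.dropLast heq
  rw [List.dropLast_concat, List.dropLast_concat] at this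
  exact Subtype.ext (FreeGroup.toWord_injective this)


variable {k : ℕ} {L : Fin k → ℝ}

lemma card_crw_le_T {m : ℝ} (hm : 0 < m) (hml : ∀ i, m ≤ L i) (R : ℝ) :
    Nat.card {l : List (Fin k × Bool) // CR l ∧ wl L l ≤ R}
      ≤ Nat.card {c : ConjClasses (FreeGroup (Fin k)) // hlen L c ≤ R} * (⌊R / m⌋₊ + 1) := by
  classical
  have hL : ∀ i, 0 < L i := fun i => lt_of_lt_of_le hm (hml i)
  have hTfin := T_finite hm hml (L := L) R
  have hcls : ∀ l : {l : List (Fin k × Bool) // CR l ∧ wl L l ≤ R},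
      hlen L (ConjClasses.mk (FreeGroup.mk l.1)) ≤ R := by
    intro l
    rw [hlen_class_CR hL l.2.1]
    exact l.2.2
  have hrot : ∀ l : {l : List (Fin k × Bool) // CR l ∧ wl L l ≤ R}, ∃ r : ℕ, r < ⌊R / m⌋₊ + 1 ∧
      l.1 = (Classical.choose (exists_CR_rep (ConjClasses.mk (FreeGroup.mk l.1)))).rotate r := by
    intro l
    obtain ⟨hbCR, hbcls⟩ :=
      Classical.choose_spec (exists_CR_rep (ConjClasses.mk (FreeGroup.mk l.1)))
    set b := Classical.choose (exists_CR_rep (ConjClasses.mk (FreeGroup.mk l.1))) with hbdef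
    have hconj : IsConj (FreeGroup.mk b) (FreeGroup.mk l.1) :=
      ConjClasses.mk_eq_mk_iff_isConj.mp hbcls
    obtain ⟨r, hr⟩ := eq_rotate_of_isConj hbCR l.2.1 hconj
    have hwlb : wl L b ≤ R := by
      have h1 : hlen L (ConjClasses.mk (FreeGroup.mk b)) = wl L b := hlen_class_CR hL hbCR
      rw [hbcls] at h1
      rw [← h1]
      exact hcls l
    have hlenb : b.length ≤ ⌊R / m⌋₊ := by
      have hR : 0 ≤ R := le_trans (wl_nonneg hL b) hwlb
      rw [Nat.le_floor_iff (div_nonneg hR hm.le), le_div_iff₀ hm]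
      have := wl_ge_length hml b
      linarith
    by_cases hb0 : b.length = 0
    · refine ⟨0, by omega, ?_⟩
      have hbn : b = [] := List.eq_nil_of_length_eq_zero hb0
      rw [hr, hbn]
      simp
    · refine ⟨r % b.length, ?_, ?_⟩
      · have := Nat.mod_lt r (Nat.pos_of_ne_zero hb0)
        omega
      · rw [hr, List.rotate_mod]
  have hinj := Nat.card_le_card_of_injective
    (fun l : {l : List (Fin k × Bool) // CR l ∧ wl L l ≤ R} =>
      ((⟨ConjClasses.mk (FreeGroup.mk l.1), hcls l⟩ : {c // hlen L c ≤ R}),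
       (⟨Classical.choose (hrot l), (Classical.choose_spec (hrot l)).1⟩ : Fin (⌊R / m⌋₊ + 1))))
    ?_
  · calc Nat.card {l : List (Fin k × Bool) // CR l ∧ wl L l ≤ R}
        ≤ Nat.card ({c : ConjClasses (FreeGroup (Fin k)) // hlen L c ≤ R}
            × Fin (⌊R / m⌋₊ + 1)) := hinj
      _ = Nat.card {c : ConjClasses (FreeGroup (Fin k)) // hlen L c ≤ R} * (⌊R / m⌋₊ + 1) := by
          rw [Nat.card_prod]
          congr 1
          rw [Nat.card_eq_fintype_card, Fintype.card_fin]
  · intro l₁ l₂ heq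
    rw [Prod.mk.injEq, Subtype.mk.injEq, Fin.mk.injEq] at heq
    obtain ⟨hc, hr⟩ := heq
    have h1 := (Classical.choose_spec (hrot l₁)).2
    have h2 := (Classical.choose_spec (hrot l₂)).2
    apply Subtype.ext
    rw [h1, h2, hr, hc]

lemma wlen_one : wlen L (1 : FreeGroup (Fin k)) = 0 := by
  rw [wlen_def, FreeGroup.toWord_one]
  simp [wl]

lemma B_data {m : ℝ} (hm : 0 < m) (hml : ∀ i, m ≤ L i) {R : ℝ} (hR0 : 0 ≤ R)
    {c : ConjClasses (FreeGroup (Fin k))}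
    (hbad : ¬∃ g, ConjClasses.mk g = c ∧ IsRootFree g) (hcR : hlen L c ≤ R) :
    ∃ p : FreeGroup (Fin k) × ℕ, p.2 < ⌊R / m⌋₊ + 3 ∧ wlen L p.1 ≤ R / 2 ∧
      ConjClasses.mk (p.1 ^ p.2) = c := by
  have hL : ∀ i, 0 < L i := fun i => lt_of_lt_of_le hm (hml i)
  obtain ⟨g₀, hg₀⟩ := ConjClasses.exists_rep c
  have hnrf : ¬ IsRootFree g₀ := fun hrf => hbad ⟨g₀, hg₀, hrf⟩
  by_cases h1 : g₀ = 1
  · refine ⟨(1, 2), by omega, by rw [wlen_one]; linarith, ?_⟩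
    rw [one_pow, ← h1, hg₀]
  · have hpow : ∃ h n, 2 ≤ n ∧ g₀ = h ^ n := by
      by_contra hcon
      push_neg at hcon
      exact hnrf ⟨h1, fun h n hn => hcon h n hn⟩
    obtain ⟨h, n, hn2, hgp⟩ := hpow
    obtain ⟨u, l₀, hl₀, hu⟩ := exists_cyclic_reduction h
    have hconj : IsConj ((FreeGroup.mk l₀) ^ n) g₀ := by
      rw [hgp, hu, conj_pow]
      exact isConj_iff.mpr ⟨u, rfl⟩
    have hcls : ConjClasses.mk ((FreeGroup.mk l₀) ^ n) = c := by
      rw [← hg₀]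
      exact ConjClasses.mk_eq_mk_iff_isConj.mpr hconj
    have hCRn := CR_flatten hl₀ n
    have hclsJ : ConjClasses.mk (FreeGroup.mk ((List.replicate n l₀).flatten)) = c := by
      rw [← FreeGroup.pow_mk]
      exact hcls
    have hlenc : hlen L c = n * wl L l₀ := by
      rw [← hclsJ, hlen_class_CR hL hCRn.1, wl_flatten_replicate]
    have hl₀ne : l₀ ≠ [] := by
      intro hnil
      apply h1
      have hml1 : FreeGroup.mk l₀ = 1 := by rw [hnil, ← FreeGroup.one_eq_mk]
      have hg1 : IsConj (1 : FreeGroup (Fin k)) g₀ := by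
        have hcc := hconj
        rw [hml1, one_pow] at hcc
        exact hcc
      obtain ⟨v, hv⟩ := isConj_iff.mp hg1
      rw [← hv]
      group
    have hwl₀ : m ≤ wl L l₀ := wl_singleton_ge hm hml hl₀ne
    have hwlnn : 0 ≤ wl L l₀ := wl_nonneg hL l₀
    have hnle : n < ⌊R / m⌋₊ + 3 := by
      have h2 : (n : ℝ) * m ≤ R := by
        calc (n : ℝ) * m ≤ n * wl L l₀ := by
              apply mul_le_mul_of_nonneg_left hwl₀ (by positivity)
          _ ≤ R := by rw [← hlenc]; exact hcR
      have h3 : (n : ℝ) ≤ R / m := by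
        rw [le_div_iff₀ hm]
        exact h2
      have := Nat.le_floor h3
      omega
    refine ⟨(FreeGroup.mk l₀, n), hnle, ?_, hcls⟩
    rw [wlen_def, toWord_mk_of_RW hl₀.1]
    have h2n : (2 : ℝ) ≤ n := by exact_mod_cast hn2
    nlinarith [hlenc ▸ hcR]

lemma card_B_le {m : ℝ} (hm : 0 < m) (hml : ∀ i, m ≤ L i) {R : ℝ} (hR0 : 0 ≤ R) :
    Nat.card {c : ConjClasses (FreeGroup (Fin k)) //
        ¬(∃ g, ConjClasses.mk g = c ∧ IsRootFree g) ∧ hlen L c ≤ R}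
      ≤ Nat.card {g : FreeGroup (Fin k) // wlen L g ≤ R / 2} * (⌊R / m⌋₊ + 3) := by
  classical
  have hfin := ballT_finite hm hml (L := L) (R / 2)
  have hdata := fun c : {c : ConjClasses (FreeGroup (Fin k)) //
      ¬(∃ g, ConjClasses.mk g = c ∧ IsRootFree g) ∧ hlen L c ≤ R} =>
    B_data hm hml hR0 c.2.1 c.2.2
  have hinj := Nat.card_le_card_of_injective
    (fun c : {c : ConjClasses (FreeGroup (Fin k)) //
        ¬(∃ g, ConjClasses.mk g = c ∧ IsRootFree g) ∧ hlen L c ≤ R} =>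
      ((⟨(Classical.choose (hdata c)).1,
          (Classical.choose_spec (hdata c)).2.1⟩ :
            {g : FreeGroup (Fin k) // wlen L g ≤ R / 2}),
       (⟨(Classical.choose (hdata c)).2,
          (Classical.choose_spec (hdata c)).1⟩ :
            Fin (⌊R / m⌋₊ + 3)))) ?_
  · calc Nat.card {c : ConjClasses (FreeGroup (Fin k)) //
          ¬(∃ g, ConjClasses.mk g = c ∧ IsRootFree g) ∧ hlen L c ≤ R}
        ≤ Nat.card ({g : FreeGroup (Fin k) // wlen L g ≤ R / 2} × Fin (⌊R / m⌋₊ + 3)) := hinj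
      _ = Nat.card {g : FreeGroup (Fin k) // wlen L g ≤ R / 2} * (⌊R / m⌋₊ + 3) := by
          rw [Nat.card_prod]
          congr 1
          rw [Nat.card_eq_fintype_card, Fintype.card_fin]
  · intro c₁ c₂ heq
    rw [Prod.mk.injEq, Subtype.mk.injEq, Fin.mk.injEq] at heq
    obtain ⟨hg, hn⟩ := heq
    have hpair : Classical.choose (hdata c₁) = Classical.choose (hdata c₂) :=
      Prod.ext hg hn
    have h1 := (Classical.choose_spec (hdata c₁)).2.2
    have h2 := (Classical.choose_spec (hdata c₂)).2.2
    apply Subtype.ext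
    rw [hpair] at h1
    exact h1.symm.trans h2

lemma card_partition {m : ℝ} (hm : 0 < m) (hml : ∀ i, m ≤ L i) {R : ℝ} :
    Nat.card {c : ConjClasses (FreeGroup (Fin k)) // hlen L c ≤ R}
      = Nat.card {c : ConjClasses (FreeGroup (Fin k)) //
          (∃ g, ConjClasses.mk g = c ∧ IsRootFree g) ∧ hlen L c ≤ R}
        + Nat.card {c : ConjClasses (FreeGroup (Fin k)) //
          ¬(∃ g, ConjClasses.mk g = c ∧ IsRootFree g) ∧ hlen L c ≤ R} := by
  classical
  haveI hfin := T_finite hm hml (L := L) R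
  have e : {c : ConjClasses (FreeGroup (Fin k)) // hlen L c ≤ R}
        ≃ {c : ConjClasses (FreeGroup (Fin k)) //
            (∃ g, ConjClasses.mk g = c ∧ IsRootFree g) ∧ hlen L c ≤ R}
          ⊕ {c : ConjClasses (FreeGroup (Fin k)) //
            ¬(∃ g, ConjClasses.mk g = c ∧ IsRootFree g) ∧ hlen L c ≤ R} := by
    refine ⟨fun c => if h : ∃ g, ConjClasses.mk g = c.1 ∧ IsRootFree g
        then Sum.inl ⟨c.1, h, c.2⟩ else Sum.inr ⟨c.1, h, c.2⟩,
      fun s => Sum.elim (fun c => ⟨c.1, c.2.2⟩) (fun c => ⟨c.1, c.2.2⟩) s, ?_, ?_⟩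
    · intro c
      by_cases h : ∃ g, ConjClasses.mk g = c.1 ∧ IsRootFree g <;> simp [h]
    · intro s
      rcases s with c | c
      · simp [c.2.1]
      · simp [c.2.1]
  rw [Nat.card_congr e]
  haveI : Finite {c : ConjClasses (FreeGroup (Fin k)) //
      (∃ g, ConjClasses.mk g = c ∧ IsRootFree g) ∧ hlen L c ≤ R} := by
    apply Finite.of_injective (fun c => (⟨c.1, c.2.2⟩ :
      {c : ConjClasses (FreeGroup (Fin k)) // hlen L c ≤ R}))
    intro a b hab
    have h' := congrArg Subtype.val hab
    exact Subtype.ext h'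
  haveI : Finite {c : ConjClasses (FreeGroup (Fin k)) //
      ¬(∃ g, ConjClasses.mk g = c ∧ IsRootFree g) ∧ hlen L c ≤ R} := by
    apply Finite.of_injective (fun c => (⟨c.1, c.2.2⟩ :
      {c : ConjClasses (FreeGroup (Fin k)) // hlen L c ≤ R}))
    intro a b hab
    have h' := congrArg Subtype.val hab
    exact Subtype.ext h'
  exact Nat.card_sum


variable {k : ℕ} {L : Fin k → ℝ}

lemma two_pow_le_ball (hk : 2 ≤ k) {m Mx : ℝ} (hm : 0 < m) (hml : ∀ i, m ≤ L i)
    (hMx0 : 0 < Mx) (hM0 : L ⟨0, by omega⟩ ≤ Mx) (hM1 : L ⟨1, by omega⟩ ≤ Mx)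
    {R : ℝ} (hR : 0 ≤ R) :
    2 ^ ⌊R / Mx⌋₊ ≤ Nat.card {g : FreeGroup (Fin k) // wlen L g ≤ R} := by
  classical
  haveI := ballT_finite hm hml (L := L) R
  set i0 : Fin k := ⟨0, by omega⟩
  set i1 : Fin k := ⟨1, by omega⟩
  set n := ⌊R / Mx⌋₊ with hn
  set w : (Fin n → Bool) → List (Fin k × Bool) :=
    fun b => List.ofFn (fun j => ((if b j then i0 else i1), true)) with hw
  have hmem : ∀ b, ∀ p ∈ w b, p.2 = true := by
    intro b p hp
    rw [hw] at hp
    obtain ⟨j, hj⟩ := List.mem_ofFn.mp hp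
    rw [← hj]
  have hRW : ∀ b, RW (w b) := by
    intro b
    apply RW_of_no_pattern
    intro L₂ L₃ x bb hl
    have h1 : (x, bb) ∈ w b := by rw [hl]; simp
    have h2 : (x, !bb) ∈ w b := by rw [hl]; simp
    have e1 := hmem b _ h1
    have e2 := hmem b _ h2
    simp only at e1 e2
    rw [e1] at e2
    simp at e2
  have hwlen : ∀ b, wlen L (FreeGroup.mk (w b)) ≤ R := by
    intro b
    rw [wlen_def, toWord_mk_of_RW (hRW b)]
    have hlen : (List.map (fun x => L x.1) (w b)).length = n := by
      rw [List.length_map, hw, List.length_ofFn]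
    have hbd : ∀ y ∈ List.map (fun x => L x.1) (w b), y ≤ Mx := by
      intro y hy
      obtain ⟨p, hp, rfl⟩ := List.mem_map.mp hy
      rw [hw] at hp
      obtain ⟨j, hj⟩ := List.mem_ofFn.mp hp
      rw [← hj]
      by_cases hb : b j <;> simp [hb, hM0, hM1]
    have := List.sum_le_card_nsmul _ Mx hbd
    rw [hlen, nsmul_eq_mul] at this
    have hfl : (n : ℝ) * Mx ≤ R := by
      have h1 : (n : ℝ) ≤ R / Mx := Nat.floor_le (div_nonneg hR hMx0.le)
      rw [← le_div_iff₀ hMx0]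
      exact h1
    calc wl L (w b) ≤ (n : ℝ) * Mx := this
      _ ≤ R := hfl
  have hinj : Function.Injective (fun b : Fin n → Bool =>
      (⟨FreeGroup.mk (w b), hwlen b⟩ : {g : FreeGroup (Fin k) // wlen L g ≤ R})) := by
    intro b₁ b₂ heq
    rw [Subtype.mk.injEq] at heq
    have hweq : w b₁ = w b₂ := by
      have := congrArg FreeGroup.toWord heq
      rwa [toWord_mk_of_RW (hRW b₁), toWord_mk_of_RW (hRW b₂)] at this
    rw [hw] at hweq
    have := List.ofFn_inj.mp hweq
    funext j
    have hj := congrFun this j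
    simp only [Prod.mk.injEq] at hj
    by_cases h1 : b₁ j <;> by_cases h2 : b₂ j <;> simp_all [i0, i1]
  have := Nat.card_le_card_of_injective _ hinj
  calc (2 : ℕ) ^ n = Nat.card (Fin n → Bool) := by
        rw [Nat.card_fun, Nat.card_eq_fintype_card (α := Bool),
          Nat.card_eq_fintype_card (α := Fin n)]
        simp
    _ ≤ _ := this



open Real

lemma polylog_tendsto {m : ℝ} (hm : 0 < m) (a : ℝ) (ha : 1 ≤ a) :
    Tendsto (fun R : ℝ => Real.log ((⌊R / m⌋₊ : ℝ) + a) / R) atTop (𝓝 0) := by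
  have h1 : Tendsto (fun R : ℝ => R / m + a) atTop atTop :=
    tendsto_atTop_add_const_right _ a (Tendsto.atTop_div_const hm tendsto_id)
  have h2 : Tendsto (fun x : ℝ => Real.log x / x) atTop (𝓝 0) :=
    Real.isLittleO_log_id_atTop.tendsto_div_nhds_zero
  have h4 : Tendsto (fun R : ℝ => (R / m + a) / R) atTop (𝓝 (1 / m)) := by
    have h5 : Tendsto (fun R : ℝ => 1 / m + a / R) atTop (𝓝 (1 / m + 0)) :=
      tendsto_const_nhds.add (Tendsto.div_atTop tendsto_const_nhds tendsto_id)
    rw [add_zero] at h5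
    apply Tendsto.congr' ?_ h5
    filter_upwards [eventually_gt_atTop (0 : ℝ)] with R hR
    field_simp
  have hupper : Tendsto (fun R : ℝ => Real.log (R / m + a) / R) atTop (𝓝 0) := by
    have h3 := (h2.comp h1).mul h4
    rw [zero_mul] at h3
    apply Tendsto.congr' ?_ h3
    filter_upwards [eventually_gt_atTop (0 : ℝ)] with R hR
    have hu : R / m + a ≠ 0 := by positivity
    show Real.log (R / m + a) / (R / m + a) * ((R / m + a) / R) = _
    field_simp
  apply tendsto_of_tendsto_of_tendsto_of_le_of_le' tendsto_const_nhds hupper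
  · filter_upwards [eventually_gt_atTop (0 : ℝ)] with R hR
    apply div_nonneg ?_ hR.le
    apply Real.log_nonneg
    have : (0 : ℝ) ≤ (⌊R / m⌋₊ : ℝ) := Nat.cast_nonneg _
    linarith
  · filter_upwards [eventually_gt_atTop (0 : ℝ)] with R hR
    apply div_le_div_of_nonneg_right ?_ hR.le
    apply Real.log_le_log (by positivity)
    have : (⌊R / m⌋₊ : ℝ) ≤ R / m := Nat.floor_le (by positivity)
    linarith

lemma tendsto_shift {F : ℝ → ℝ} {h c : ℝ}
    (hF : Tendsto (fun R => F R / R) atTop (𝓝 h)) :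
    Tendsto (fun R => F (R - c) / R) atTop (𝓝 h) := by
  have h1 : Tendsto (fun R : ℝ => R - c) atTop atTop :=
    (tendsto_atTop_add_const_right _ (-c) tendsto_id).congr
      (fun x => (sub_eq_add_neg x c).symm)
  have h2 := (hF.comp h1).mul (show Tendsto (fun R : ℝ => (R - c) / R) atTop (𝓝 1) by
    have h5 : Tendsto (fun R : ℝ => 1 - c / R) atTop (𝓝 (1 - 0)) :=
      tendsto_const_nhds.sub (Tendsto.div_atTop tendsto_const_nhds tendsto_id)
    rw [sub_zero] at h5
    apply Tendsto.congr' ?_ h5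
    filter_upwards [eventually_gt_atTop (0 : ℝ)] with R hR
    field_simp)
  rw [mul_one] at h2
  apply Tendsto.congr' ?_ h2
  filter_upwards [eventually_gt_atTop (max 0 c)] with R hR
  have hRc : R - c ≠ 0 := by
    have := lt_of_le_of_lt (le_max_right 0 c) hR
    intro hcon
    linarith
  have hR0 : R ≠ 0 := by
    have := lt_of_le_of_lt (le_max_left 0 c) hR
    linarith
  show F (R - c) / (R - c) * ((R - c) / R) = F (R - c) / R
  field_simp

lemma tendsto_half {F : ℝ → ℝ} {h : ℝ}
    (hF : Tendsto (fun R => F R / R) atTop (𝓝 h)) :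
    Tendsto (fun R => F (R / 2) / R) atTop (𝓝 (h / 2)) := by
  have h1 : Tendsto (fun R : ℝ => R / 2) atTop atTop :=
    Tendsto.atTop_div_const (by norm_num) tendsto_id
  have h2 := (hF.comp h1).mul (tendsto_const_nhds (x := (1 : ℝ) / 2))
  apply Tendsto.congr ?_ (by convert h2 using 2; ring)
  intro R
  show F (R / 2) / (R / 2) * (1 / 2) = F (R / 2) / R
  rcases eq_or_ne R 0 with rfl | hR
  · simp
  · field_simp


/-- Remark 4.2: for a metric structure `L` with volume entropy `h`, the exponential
growth rate of root-free nontrivial conjugacy classes exists and equals `h`. -/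
theorem mcshane_stmt16 (k : ℕ) (hk : 2 ≤ k) (L : Fin k → ℝ) (hL : ∀ i, 0 < L i)
    (h : ℝ)
    (hent : Tendsto (fun R : ℝ =>
        Real.log (Nat.card {g : FreeGroup (Fin k) // wlen L g ≤ R}) / R) atTop (𝓝 h)) :
    Tendsto (fun R : ℝ =>
        Real.log (Nat.card {c : ConjClasses (FreeGroup (Fin k)) //
          (∃ g, ConjClasses.mk g = c ∧ IsRootFree g) ∧ hlen L c ≤ R}) / R)
      atTop (𝓝 h) := by
  classical
  obtain ⟨m, hm, hml⟩ : ∃ m : ℝ, 0 < m ∧ ∀ i, m ≤ L i := by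
    have hne : (Finset.univ : Finset (Fin k)).Nonempty := ⟨⟨0, by omega⟩, Finset.mem_univ _⟩
    refine ⟨Finset.univ.inf' hne L, ?_, fun i => Finset.inf'_le L (Finset.mem_univ i)⟩
    rw [Finset.lt_inf'_iff]
    exact fun i _ => hL i
  set Mx : ℝ := max (L ⟨0, by omega⟩) (L ⟨1, by omega⟩) with hMxdef
  have hMx0 : 0 < Mx := lt_of_lt_of_le (hL _) (le_max_left _ _)
  set N : ℝ → ℕ := fun R => Nat.card {g : FreeGroup (Fin k) // wlen L g ≤ R} with hNdef
  set Z : ℝ → ℕ := fun R => Nat.card {c : ConjClasses (FreeGroup (Fin k)) //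
      (∃ g, ConjClasses.mk g = c ∧ IsRootFree g) ∧ hlen L c ≤ R} with hZdef
  set B : ℝ → ℕ := fun R => Nat.card {c : ConjClasses (FreeGroup (Fin k)) //
      ¬(∃ g, ConjClasses.mk g = c ∧ IsRootFree g) ∧ hlen L c ≤ R} with hBdef
  set T : ℝ → ℕ := fun R => Nat.card {c : ConjClasses (FreeGroup (Fin k)) //
      hlen L c ≤ R} with hTdef
  set P : ℝ → ℝ := fun R => (⌊R / m⌋₊ : ℝ) with hPdef
  -- basic facts
  have hN1 : ∀ R : ℝ, 0 ≤ R → 1 ≤ N R := by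
    intro R hR
    haveI := ballT_finite hm hml (L := L) R
    haveI : Nonempty {g : FreeGroup (Fin k) // wlen L g ≤ R} :=
      ⟨⟨1, by rw [wlen_one]; exact hR⟩⟩
    exact Nat.card_pos
  -- positivity of h
  have hpos : 0 < h := by
    have hcomp : ∀ᶠ R in atTop,
        (R / Mx - 1) * Real.log 2 / R ≤ Real.log (N R) / R := by
      filter_upwards [eventually_gt_atTop (0 : ℝ)] with R hRpos
      have h2p := two_pow_le_ball hk hm hml hMx0 (le_max_left _ _) (le_max_right _ _) hRpos.le
      have hlog : (⌊R / Mx⌋₊ : ℝ) * Real.log 2 ≤ Real.log (N R) := by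
        have hcast : ((2 : ℕ) ^ ⌊R / Mx⌋₊ : ℝ) ≤ (N R : ℝ) := by exact_mod_cast h2p
        have := Real.log_le_log (by positivity) hcast
        rwa [show ((2 : ℕ) ^ ⌊R / Mx⌋₊ : ℝ) = (2 : ℝ) ^ ⌊R / Mx⌋₊ by push_cast; ring,
          Real.log_pow] at this
      have hfl : R / Mx - 1 ≤ (⌊R / Mx⌋₊ : ℝ) := (Nat.sub_one_lt_floor _).le
      have hlog2 : (0 : ℝ) ≤ Real.log 2 := Real.log_nonneg (by norm_num)
      apply div_le_div_of_nonneg_right ?_ hRpos.le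
      nlinarith
    have hlim : Tendsto (fun R : ℝ => (R / Mx - 1) * Real.log 2 / R) atTop
        (𝓝 (Real.log 2 / Mx)) := by
      have h5 : Tendsto (fun R : ℝ => Real.log 2 / Mx - Real.log 2 / R) atTop
          (𝓝 (Real.log 2 / Mx - 0)) :=
        tendsto_const_nhds.sub (Tendsto.div_atTop tendsto_const_nhds tendsto_id)
      rw [sub_zero] at h5
      apply Tendsto.congr' ?_ h5
      filter_upwards [eventually_gt_atTop (0 : ℝ)] with R hR
      field_simp
    have hle : Real.log 2 / Mx ≤ h := le_of_tendsto_of_tendsto hlim hent hcomp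
    have : (0 : ℝ) < Real.log 2 / Mx := by
      apply div_pos (Real.log_pos (by norm_num)) hMx0
    linarith
  -- limit of the lower comparison function
  have hshift : Tendsto (fun R : ℝ => Real.log (N (R - Mx)) / R) atTop (𝓝 h) :=
    tendsto_shift (F := fun R => Real.log (N R)) hent
  have hhalf : Tendsto (fun R : ℝ => Real.log (N (R / 2)) / R) atTop (𝓝 (h / 2)) :=
    tendsto_half (F := fun R => Real.log (N R)) hent
  have hpl1 : Tendsto (fun R : ℝ => Real.log (P R + 1) / R) atTop (𝓝 0) :=
    polylog_tendsto hm 1 le_rfl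
  have hpl3 : Tendsto (fun R : ℝ => Real.log (P R + 3) / R) atTop (𝓝 0) :=
    polylog_tendsto hm 3 (by norm_num)
  have hl2R : Tendsto (fun R : ℝ => Real.log 2 / R) atTop (𝓝 0) :=
    Tendsto.div_atTop tendsto_const_nhds tendsto_id
  have hlowT : Tendsto (fun R : ℝ =>
      (Real.log (N (R - Mx)) - Real.log 2 - Real.log (P R + 1)) / R) atTop (𝓝 h) := by
    have := (hshift.sub hl2R).sub hpl1
    rw [sub_zero, sub_zero] at this
    apply Tendsto.congr ?_ this
    intro R
    ring
  -- the eventual domination of powers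
  have hdelta : Tendsto (fun R : ℝ =>
      Real.log (N (R - Mx)) / R - Real.log (N (R / 2)) / R - Real.log (P R + 3) / R
        - Real.log (P R + 1) / R - Real.log 2 / R) atTop (𝓝 (h / 2)) := by
    have := (((hshift.sub hhalf).sub hpl3).sub hpl1).sub hl2R
    rw [sub_zero, sub_zero, sub_zero] at this
    have heq : h - h / 2 = h / 2 := by ring
    rwa [heq] at this
  have hEdom : ∀ᶠ R : ℝ in atTop,
      (N (R / 2) : ℝ) * (P R + 3) * (P R + 1) * 2 < (N (R - Mx) : ℝ) := by
    have hev := hdelta.eventually (eventually_gt_nhds (by linarith : (0 : ℝ) < h / 2))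
    filter_upwards [hev, eventually_gt_atTop (0 : ℝ), eventually_ge_atTop Mx,
      eventually_ge_atTop (0 : ℝ)] with R hΔ hR0 hRM hRge0
    have hP0 : (0 : ℝ) ≤ P R := Nat.cast_nonneg _
    have hN2 : (1 : ℝ) ≤ (N (R / 2) : ℝ) := by exact_mod_cast hN1 (R / 2) (by linarith)
    have hNM : (1 : ℝ) ≤ (N (R - Mx) : ℝ) := by exact_mod_cast hN1 (R - Mx) (by linarith)
    have hA : (0 : ℝ) < (N (R / 2) : ℝ) * (P R + 3) * (P R + 1) * 2 := by positivity
    rw [← Real.log_lt_log_iff hA (by linarith)]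
    have hlogA : Real.log ((N (R / 2) : ℝ) * (P R + 3) * (P R + 1) * 2)
        = Real.log (N (R / 2)) + Real.log (P R + 3) + Real.log (P R + 1) + Real.log 2 := by
      rw [Real.log_mul (by positivity) (by norm_num),
        Real.log_mul (by positivity) (by positivity),
        Real.log_mul (by positivity) (by positivity)]
    rw [hlogA]
    have hnum : 0 < Real.log (N (R - Mx)) - Real.log (N (R / 2)) - Real.log (P R + 3)
        - Real.log (P R + 1) - Real.log 2 := by
      have := mul_pos hΔ hR0
      have hexp : (Real.log (N (R - Mx)) / R - Real.log (N (R / 2)) / R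
          - Real.log (P R + 3) / R - Real.log (P R + 1) / R - Real.log 2 / R) * R
          = Real.log (N (R - Mx)) - Real.log (N (R / 2)) - Real.log (P R + 3)
            - Real.log (P R + 1) - Real.log 2 := by
        field_simp
      rwa [hexp] at this
    linarith
  -- lower bound for Z
  have hlower : ∀ᶠ R : ℝ in atTop,
      (Real.log (N (R - Mx)) - Real.log 2 - Real.log (P R + 1)) / R
        ≤ Real.log (Z R) / R := by
    filter_upwards [hEdom, eventually_gt_atTop (0 : ℝ), eventually_ge_atTop Mx,
      eventually_ge_atTop (0 : ℝ)] with R hdom hR0 hRM hRge0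
    have hP0 : (0 : ℝ) ≤ P R := Nat.cast_nonneg _
    -- chain of counting inequalities
    have c1 : (N (R - Mx) : ℝ) ≤ (T R : ℝ) * (P R + 1) := by
      have := le_trans
        (card_ball_le_crw hk hm hml ⟨le_max_left _ _, le_max_right _ _⟩ R)
        (card_crw_le_T hm hml R)
      have hcast : (N (R - Mx) : ℕ) ≤ T R * (⌊R / m⌋₊ + 1) := this
      simp only [hPdef]
      exact_mod_cast hcast
    have c2 : (T R : ℝ) = (Z R : ℝ) + (B R : ℝ) := by
      exact_mod_cast (card_partition hm hml (L := L) (R := R) : T R = Z R + B R)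
    have c3 : (B R : ℝ) ≤ (N (R / 2) : ℝ) * (P R + 3) := by
      have hc3 : B R ≤ N (R / 2) * (⌊R / m⌋₊ + 3) := card_B_le hm hml (L := L) hRge0
      simp only [hPdef]
      exact_mod_cast hc3
    have key : (N (R - Mx) : ℝ) < (Z R : ℝ) * (P R + 1) * 2 := by
      have e1 : (N (R - Mx) : ℝ) ≤ ((Z R : ℝ) + (B R : ℝ)) * (P R + 1) := by
        rw [← c2]; exact c1
      nlinarith
    have hNM : (1 : ℝ) ≤ (N (R - Mx) : ℝ) := by exact_mod_cast hN1 (R - Mx) (by linarith)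
    have hZ1 : (1 : ℝ) ≤ (Z R : ℝ) := by
      have hZpos : (0 : ℝ) < (Z R : ℝ) := by nlinarith
      exact_mod_cast Nat.one_le_iff_ne_zero.mpr (by exact_mod_cast hZpos.ne')
    apply div_le_div_of_nonneg_right ?_ hR0.le
    have hlog : Real.log (N (R - Mx)) ≤ Real.log ((Z R : ℝ) * (P R + 1) * 2) :=
      Real.log_le_log (by linarith) key.le
    have hsplit : Real.log ((Z R : ℝ) * (P R + 1) * 2)
        = Real.log (Z R) + Real.log (P R + 1) + Real.log 2 := by
      rw [Real.log_mul (by positivity) (by norm_num),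
        Real.log_mul (by positivity) (by positivity)]
    rw [hsplit] at hlog
    linarith
  -- upper bound for Z
  have hupper : ∀ᶠ R : ℝ in atTop, Real.log (Z R) / R ≤ Real.log (N R) / R := by
    filter_upwards [eventually_gt_atTop (0 : ℝ)] with R hR0
    have hZN : Z R ≤ N R := by
      have h1 : Z R ≤ T R := by
        have hpart : T R = Z R + B R := card_partition hm hml (L := L) (R := R)
        omega
      exact le_trans h1 (card_T_le_ball hm hml R)
    apply div_le_div_of_nonneg_right ?_ hR0.le
    rcases Nat.eq_zero_or_pos (Z R) with hZ0 | hZp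
    · rw [hZ0]
      simp only [Nat.cast_zero, Real.log_zero]
      have : (1 : ℝ) ≤ (N R : ℝ) := by exact_mod_cast hN1 R hR0.le
      exact Real.log_nonneg this
    · apply Real.log_le_log (by exact_mod_cast hZp)
      exact_mod_cast hZN
  exact tendsto_of_tendsto_of_tendsto_of_le_of_le' hlowT hent hlower hupper

end McShane
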